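/- For every integer k ≥ 1 there exists a constant C > 0 such that for every finite simple graph G with m edges, the number of injective graph homomorphisms from the cycle graph on 2k+1 vertices into G is at most C · m^k · √m. -/

import Mathlib

/-- The cycle graph on `ZMod n`: `i` is adjacent to `i + 1` and `i - 1`. -/
def cycleGraphZMod (n : ℕ) : SimpleGraph (ZMod n) :=
  SimpleGraph.fromRel (fun i j => j = i + 1)

open SimpleGraph Finset

lemma cycle_adj_succ {n : ℕ} (hn : 1 < n) (a : ZMod n) :
    (cycleGraphZMod n).Adj a (a + 1) := by
  haveI : Fact (1 < n) := ⟨hn⟩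
  rw [cycleGraphZMod, SimpleGraph.fromRel_adj]
  refine ⟨fun h => ?_, Or.inl rfl⟩
  exact one_ne_zero (left_eq_add.mp h)

/-- The walk `0, 1, 2, ..., j` in the cycle graph. -/
def pathWalk (n : ℕ) (hn : 1 < n) :
    (j : ℕ) → (cycleGraphZMod n).Walk (0 : ZMod n) ((j : ℕ) : ZMod n)
  | 0 => SimpleGraph.Walk.nil.copy rfl (by norm_cast)
  | (j + 1) => (pathWalk n hn j).concat
      (show (cycleGraphZMod n).Adj ((j : ℕ) : ZMod n) (((j + 1 : ℕ)) : ZMod n) by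
        push_cast
        exact cycle_adj_succ hn _)

lemma pathWalk_length (n : ℕ) (hn : 1 < n) : ∀ j : ℕ, (pathWalk n hn j).length = j := by
  intro j
  induction j with
  | zero => simp [pathWalk]
  | succ j ih => simp [pathWalk, SimpleGraph.Walk.length_concat, ih]

lemma pathWalk_support (n : ℕ) (hn : 1 < n) :
    ∀ j : ℕ, ∀ i : ℕ, i ≤ j → ((i : ℕ) : ZMod n) ∈ (pathWalk n hn j).support := by
  intro j
  induction j with
  | zero =>
    intro i hi
    interval_cases i
    simp [pathWalk]
  | succ j ih =>
    intro i hi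
    rw [pathWalk, SimpleGraph.Walk.support_concat, List.mem_append]
    rcases Nat.lt_or_ge i (j + 1) with h | h
    · exact Or.inl (ih i (Nat.lt_succ_iff.mp h))
    · have : i = j + 1 := le_antisymm hi h
      subst this
      simp

/-- For every `k ≥ 1` there is a constant `C > 0` such that every finite simple
graph `G` with `m` edges admits at most `C · m^k · √m` injective graph
homomorphisms from the cycle on `2k + 1` vertices. -/
theorem stmt_8 (k : ℕ) (hk : 1 ≤ k) :
    ∃ C : ℝ, 0 < C ∧
      ∀ (V : Type) (_ : Fintype V) (_ : DecidableEq V)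
        (G : SimpleGraph V) (_ : DecidableRel G.Adj),
        (Nat.card {f : cycleGraphZMod (2 * k + 1) →g G // Function.Injective f} : ℝ) ≤
          C * (G.edgeFinset.card : ℝ) ^ k * Real.sqrt (G.edgeFinset.card) := by
  refine ⟨2 ^ k * Real.sqrt 2, by positivity, ?_⟩
  intro V instV instDV G instDG
  set n : ℕ := 2 * k + 1 with hn_def
  have hn : 1 < n := by omega
  set m : ℝ := (G.edgeFinset.card : ℝ) with hm_def
  have hm0 : (0 : ℝ) ≤ m := by positivity
  set A : Matrix V V ℝ := G.adjMatrix ℝ with hA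
  -- nonnegativity of entries of powers
  have hApos : ∀ (L : ℕ) (u v : V), 0 ≤ (A ^ L) u v := by
    intro L
    induction L with
    | zero =>
      intro u v
      rw [pow_zero, Matrix.one_apply]
      split <;> norm_num
    | succ L ih =>
      intro u v
      rw [pow_succ, Matrix.mul_apply]
      refine Finset.sum_nonneg fun x _ => mul_nonneg (ih u x) ?_
      rw [hA, SimpleGraph.adjMatrix_apply]
      split <;> norm_num
  -- Frobenius-type quantity
  set F : ℕ → ℝ := fun L => ∑ u : V, ∑ v : V, ((A ^ L) u v) ^ 2 with hF
  have hFnn : ∀ L, 0 ≤ F L := fun L =>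
    Finset.sum_nonneg fun u _ => Finset.sum_nonneg fun v _ => sq_nonneg _
  have hF1 : F 1 = 2 * m := by
    have hsq : ∀ u v : V, (A u v) ^ 2 = A u v := by
      intro u v
      rw [hA, SimpleGraph.adjMatrix_apply]
      split <;> norm_num
    have hrow : ∀ u : V, ∑ v : V, A u v = (G.degree u : ℝ) := by
      intro u
      rw [hA]
      simp only [SimpleGraph.adjMatrix_apply]
      rw [Finset.sum_boole]
      congr 1
      rw [SimpleGraph.degree, SimpleGraph.neighborFinset_eq_filter]
    calc F 1 = ∑ u : V, ∑ v : V, A u v := by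
          simp only [hF, pow_one]
          exact Finset.sum_congr rfl fun u _ => Finset.sum_congr rfl fun v _ => hsq u v
      _ = ∑ u : V, (G.degree u : ℝ) := Finset.sum_congr rfl fun u _ => hrow u
      _ = 2 * m := by
          rw [← Nat.cast_sum, SimpleGraph.sum_degrees_eq_twice_card_edges]
          push_cast
          rfl
  have hFmul : ∀ L M : ℕ, F (L + M) ≤ F L * F M := by
    intro L M
    have key : ∀ u v : V,
        ((A ^ (L + M)) u v) ^ 2 ≤ (∑ x : V, ((A ^ L) u x) ^ 2) * (∑ x : V, ((A ^ M) x v) ^ 2) := by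
      intro u v
      rw [pow_add, Matrix.mul_apply]
      exact Finset.sum_mul_sq_le_sq_mul_sq _ _ _
    calc F (L + M)
        ≤ ∑ u : V, ∑ v : V, (∑ x : V, ((A ^ L) u x) ^ 2) * (∑ x : V, ((A ^ M) x v) ^ 2) :=
          Finset.sum_le_sum fun u _ => Finset.sum_le_sum fun v _ => key u v
      _ = (∑ u : V, ∑ x : V, ((A ^ L) u x) ^ 2) * (∑ v : V, ∑ x : V, ((A ^ M) x v) ^ 2) := by
          rw [Finset.sum_mul_sum]
      _ = F L * F M := by
          congr 1
          rw [Finset.sum_comm]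
  have hFpow : ∀ L : ℕ, 1 ≤ L → F L ≤ (2 * m) ^ L := by
    intro L hL
    induction L, hL using Nat.le_induction with
    | base => rw [hF1, pow_one]
    | succ L hL ih =>
      calc F (L + 1) ≤ F L * F 1 := hFmul L 1
        _ ≤ (2 * m) ^ L * (2 * m) := by
            rw [hF1]
            exact mul_le_mul_of_nonneg_right ih (by positivity)
        _ = (2 * m) ^ (L + 1) := by rw [pow_succ]
  -- the trace
  set T : ℝ := ∑ u : V, (A ^ n) u u with hT
  have hTnn : 0 ≤ T := Finset.sum_nonneg fun u _ => hApos n u u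
  have hT2 : T ^ 2 ≤ (2 * m) ^ n := by
    have hrw : T = ∑ p : V × V, ((A ^ k) p.1 p.2) * ((A ^ (k + 1)) p.2 p.1) := by
      rw [hT, Fintype.sum_prod_type]
      refine Finset.sum_congr rfl fun u _ => ?_
      rw [show n = k + (k + 1) by omega, pow_add, Matrix.mul_apply]
    calc T ^ 2
        ≤ (∑ p : V × V, ((A ^ k) p.1 p.2) ^ 2) * (∑ p : V × V, ((A ^ (k + 1)) p.2 p.1) ^ 2) := by
          rw [hrw]
          exact Finset.sum_mul_sq_le_sq_mul_sq _ _ _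
      _ = F k * F (k + 1) := by
          congr 1
          · rw [Fintype.sum_prod_type]
          · rw [Fintype.sum_prod_type, Finset.sum_comm]
      _ ≤ (2 * m) ^ k * (2 * m) ^ (k + 1) :=
          mul_le_mul (hFpow k hk) (hFpow (k + 1) (by omega)) (hFnn _) (by positivity)
      _ = (2 * m) ^ n := by rw [← pow_add]; congr 1; omega
  have hTle : T ≤ (2 * m) ^ k * Real.sqrt (2 * m) := by
    have h1 : T = Real.sqrt (T ^ 2) := (Real.sqrt_sq hTnn).symm
    rw [h1]
    calc Real.sqrt (T ^ 2) ≤ Real.sqrt ((2 * m) ^ n) := Real.sqrt_le_sqrt hT2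
      _ = (2 * m) ^ k * Real.sqrt (2 * m) := by
          rw [show (2 * m) ^ n = ((2 * m) ^ k) ^ 2 * (2 * m) by rw [← pow_mul, ← pow_succ]; congr 1; omega,
            Real.sqrt_mul (sq_nonneg _), Real.sqrt_sq (pow_nonneg (mul_nonneg zero_le_two hm0) k)]
  -- the counting part: injective homs inject into closed walks of length n
  have hinjcount :
      (Nat.card {f : cycleGraphZMod (2 * k + 1) →g G // Function.Injective f} : ℝ) ≤ T := by
    set W₀ : (cycleGraphZMod n).Walk 0 0 :=
      (pathWalk n hn n).copy rfl (by exact_mod_cast ZMod.natCast_self n) with hW₀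
    have hW₀len : W₀.length = n := by
      rw [hW₀, SimpleGraph.Walk.length_copy, pathWalk_length]
    haveI : NeZero n := ⟨by omega⟩
    have hW₀sup : ∀ z : ZMod n, z ∈ W₀.support := by
      intro z
      have hz : ((z.val : ℕ) : ZMod n) = z := ZMod.natCast_rightInverse z
      rw [hW₀, SimpleGraph.Walk.support_copy, ← hz]
      exact pathWalk_support n hn n z.val (le_of_lt (ZMod.val_lt z))
    -- the injection
    set Φ : {f : cycleGraphZMod (2 * k + 1) →g G // Function.Injective f} →
        Σ u : V, {p : G.Walk u u // p.length = n} :=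
      fun f => ⟨f.1 0, ⟨W₀.map f.1, by rw [SimpleGraph.Walk.length_map, hW₀len]⟩⟩ with hΦ
    have hΦinj : Function.Injective Φ := by
      intro f g h
      have hs : (W₀.map f.1).support = (W₀.map g.1).support := by
        have := congrArg (fun s : Σ u : V, {p : G.Walk u u // p.length = n} =>
          (s.2 : G.Walk s.1 s.1).support) h
        exact this
      rw [SimpleGraph.Walk.support_map, SimpleGraph.Walk.support_map,
        List.map_inj_left] at hs
      refine Subtype.ext (DFunLike.ext _ _ fun z => ?_)
      exact hs z (hW₀sup z)
    have hcard := Nat.card_le_card_of_injective Φ hΦinj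
    have hsig : (Nat.card (Σ u : V, {p : G.Walk u u // p.length = n}) : ℝ) = T := by
      rw [Nat.card_eq_fintype_card, Fintype.card_sigma, hT]
      push_cast
      refine Finset.sum_congr rfl fun u _ => ?_
      rw [hA, SimpleGraph.adjMatrix_pow_apply_eq_card_walk]
      norm_cast
    calc (Nat.card {f : cycleGraphZMod (2 * k + 1) →g G // Function.Injective f} : ℝ)
        ≤ (Nat.card (Σ u : V, {p : G.Walk u u // p.length = n}) : ℝ) := by exact_mod_cast hcard
      _ = T := hsig
  -- combine
  calc (Nat.card {f : cycleGraphZMod (2 * k + 1) →g G // Function.Injective f} : ℝ)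
      ≤ T := hinjcount
    _ ≤ (2 * m) ^ k * Real.sqrt (2 * m) := hTle
    _ = 2 ^ k * Real.sqrt 2 * m ^ k * Real.sqrt m := by
        rw [mul_pow, Real.sqrt_mul (by norm_num : (0:ℝ) ≤ 2)]
        ring
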